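/- Let a : ℝ → ℝ be continuous, 1-periodic, and strictly positive. Then the coefficient C₁₁ = ⟨a⁻¹·[[a·[[a⁻¹]]]]⟩ satisfies C₁₁ = −⟨a·[[a⁻¹]]²⟩ ≤ 0; moreover, if a is not constant then C₁₁ < 0. -/

import Mathlib

open MeasureTheory Matrix

/-- The mean of a function over one period: `⟨b⟩ = ∫₀¹ b(y) dy`. -/
noncomputable def pmean (b : ℝ → ℝ) : ℝ := ∫ y in (0:ℝ)..1, b y

/-- The fluctuating (mean-zero) part: `{b} = b − ⟨b⟩`. -/
noncomputable def pfluct (b : ℝ → ℝ) : ℝ → ℝ := fun y => b y - pmean b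

/-- The mean-zero primitive of the fluctuating part:
`[[b]](y) = ∫₀^y {b}(ξ) dξ − ∫₀¹ (∫₀^s {b}(ξ) dξ) ds`. -/
noncomputable def pbracket (b : ℝ → ℝ) : ℝ → ℝ :=
  fun y => (∫ ξ in (0:ℝ)..y, pfluct b ξ) - ∫ s in (0:ℝ)..1, (∫ ξ in (0:ℝ)..s, pfluct b ξ)

lemma pfluct_continuous {b : ℝ → ℝ} (hb : Continuous b) : Continuous (pfluct b) :=
  hb.sub continuous_const

lemma integral_pfluct {b : ℝ → ℝ} (hb : Continuous b) :
    ∫ y in (0:ℝ)..1, pfluct b y = 0 := by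
  unfold pfluct
  rw [intervalIntegral.integral_sub (hb.intervalIntegrable 0 1) intervalIntegrable_const,
    intervalIntegral.integral_const]
  simp [pmean]

lemma pbracket_hasDerivAt {b : ℝ → ℝ} (hb : Continuous b) (y : ℝ) :
    HasDerivAt (pbracket b) (pfluct b y) y := by
  have h := intervalIntegral.integral_hasDerivAt_right
    ((pfluct_continuous hb).intervalIntegrable 0 y)
    ((pfluct_continuous hb).stronglyMeasurableAtFilter _ _)
    (pfluct_continuous hb).continuousAt
  exact h.sub_const _

lemma pbracket_continuous {b : ℝ → ℝ} (hb : Continuous b) : Continuous (pbracket b) :=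
  continuous_iff_continuousAt.mpr fun y => (pbracket_hasDerivAt hb y).continuousAt

lemma pbracket_one_eq_zero {b : ℝ → ℝ} (hb : Continuous b) :
    pbracket b 1 = pbracket b 0 := by
  unfold pbracket
  rw [integral_pfluct hb]
  simp

lemma pmean_pbracket {b : ℝ → ℝ} (hb : Continuous b) : pmean (pbracket b) = 0 := by
  have hcont : Continuous fun y : ℝ => ∫ ξ in (0:ℝ)..y, pfluct b ξ :=
    continuous_iff_continuousAt.mpr fun y =>
      (intervalIntegral.integral_hasDerivAt_right
        ((pfluct_continuous hb).intervalIntegrable 0 y)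
        ((pfluct_continuous hb).stronglyMeasurableAtFilter _ _)
        (pfluct_continuous hb).continuousAt).continuousAt
  unfold pmean pbracket
  rw [intervalIntegral.integral_sub (hcont.intervalIntegrable 0 1) intervalIntegrable_const,
    intervalIntegral.integral_const]
  simp

/-- For `a` continuous, 1-periodic and strictly positive, the coefficient
`C₁₁ = ⟨a⁻¹·[[a·[[a⁻¹]]]]⟩` satisfies `C₁₁ = −⟨a·[[a⁻¹]]²⟩ ≤ 0`, with strict inequality
if `a` is not constant. -/
theorem statement12 (a : ℝ → ℝ) (ha : Continuous a) (hper : Function.Periodic a 1)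
    (hpos : ∀ y, 0 < a y)
    (C₁₁ : ℝ)
    (hC11 : C₁₁ = pmean (fun y => (a y)⁻¹
        * pbracket (fun z => a z * pbracket (fun w => (a w)⁻¹) z) y)) :
    C₁₁ = - pmean (fun y => a y * (pbracket (fun w => (a w)⁻¹) y)^2) ∧
    C₁₁ ≤ 0 ∧
    ((∃ x y, a x ≠ a y) → C₁₁ < 0) := by
  set f : ℝ → ℝ := fun w => (a w)⁻¹ with hf
  have hfc : Continuous f := ha.inv₀ fun y => (hpos y).ne'
  set β : ℝ → ℝ := pbracket f with hβ
  have hβc : Continuous β := pbracket_continuous hfc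
  set F : ℝ → ℝ := fun z => a z * β z with hF
  have hFc : Continuous F := ha.mul hβc
  set G : ℝ → ℝ := pbracket F with hG
  have hGc : Continuous G := pbracket_continuous hFc
  -- mean of G is zero
  have hmeanG : ∫ y in (0:ℝ)..1, G y = 0 := pmean_pbracket hFc
  have hmeanβ : ∫ y in (0:ℝ)..1, β y = 0 := pmean_pbracket hfc
  -- Step 1 : C₁₁ = ∫ pfluct f * G
  have step1 : C₁₁ = ∫ y in (0:ℝ)..1, pfluct f y * G y := by
    rw [hC11, pmean]
    have : ∀ y : ℝ, (a y)⁻¹ * G y = pfluct f y * G y + pmean f * G y := by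
      intro y; simp [pfluct]; ring
    simp only [this]
    rw [intervalIntegral.integral_add (f := fun y => pfluct f y * G y) (g := fun y => pmean f * G y)
        (((pfluct_continuous hfc).mul hGc).intervalIntegrable 0 1)
        ((continuous_const.mul hGc).intervalIntegrable 0 1),
      intervalIntegral.integral_const_mul, hmeanG]
    ring
  -- Step 2 : integration by parts
  have ibp : ∫ y in (0:ℝ)..1, β y * pfluct F y
      = β 1 * G 1 - β 0 * G 0 - ∫ y in (0:ℝ)..1, pfluct f y * G y := by
    apply intervalIntegral.integral_mul_deriv_eq_deriv_mul
      (fun x _ => pbracket_hasDerivAt hfc x) (fun x _ => pbracket_hasDerivAt hFc x)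
      ((pfluct_continuous hfc).intervalIntegrable 0 1)
      ((pfluct_continuous hFc).intervalIntegrable 0 1)
  have hβper : β 1 = β 0 := pbracket_one_eq_zero hfc
  have hGper : G 1 = G 0 := pbracket_one_eq_zero hFc
  -- Step 3 : ∫ β * pfluct F = ∫ a β²
  have step3 : ∫ y in (0:ℝ)..1, β y * pfluct F y
      = ∫ y in (0:ℝ)..1, a y * (β y)^2 := by
    have : ∀ y : ℝ, β y * pfluct F y = a y * (β y)^2 - pmean F * β y := by
      intro y; simp [pfluct, hF]; ring
    simp only [this]
    rw [intervalIntegral.integral_sub (f := fun y => a y * (β y)^2) (g := fun y => pmean F * β y)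
        ((ha.mul (hβc.pow 2)).intervalIntegrable 0 1)
        ((continuous_const.mul hβc).intervalIntegrable 0 1),
      intervalIntegral.integral_const_mul, hmeanβ]
    ring
  have key : C₁₁ = - ∫ y in (0:ℝ)..1, a y * (β y)^2 := by
    rw [step1]
    have := ibp
    rw [hβper, hGper, step3] at this
    linarith
  have hS_nonneg : 0 ≤ ∫ y in (0:ℝ)..1, a y * (β y)^2 := by
    apply intervalIntegral.integral_nonneg (by norm_num)
    intro x _
    exact mul_nonneg (hpos x).le (sq_nonneg _)
  refine ⟨key, by rw [key]; linarith, ?_⟩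
  rintro ⟨x₀, y₀, hne⟩
  by_contra hnot
  push_neg at hnot
  have hC0 : C₁₁ = 0 := le_antisymm (by rw [key]; linarith) hnot
  have hS0 : ∫ y in (0:ℝ)..1, a y * (β y)^2 = 0 := by
    rw [key] at hC0; linarith
  -- the set where the integrand is positive has measure zero
  set g : ℝ → ℝ := fun y => a y * (β y)^2 with hg
  have hgc : Continuous g := ha.mul (hβc.pow 2)
  have hsupp : volume (Function.support g ∩ Set.Ioc (0:ℝ) 1) = 0 := by
    by_contra hpossup
    have h1 : (0:ℝ) < ∫ y in (0:ℝ)..1, g y := by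
      rw [intervalIntegral.integral_pos_iff_support_of_nonneg_ae]
      · exact ⟨by norm_num, pos_iff_ne_zero.mpr hpossup⟩
      · filter_upwards with x
        have := (hpos x).le
        positivity
      · exact hgc.intervalIntegrable 0 1
    rw [hS0] at h1; exact lt_irrefl _ h1
  -- hence g = 0 on Ioo 0 1, so β = 0 on Ioo 0 1
  have hβ0 : ∀ x ∈ Set.Ioo (0:ℝ) 1, β x = 0 := by
    intro x hx
    by_contra hβx
    have hx_supp : x ∈ Function.support g ∩ Set.Ioo (0:ℝ) 1 := by
      refine ⟨?_, hx⟩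
      simp only [Function.mem_support, hg]
      exact (mul_pos (hpos x) (pow_two_pos_of_ne_zero hβx)).ne'
    have hopen : IsOpen (Function.support g ∩ Set.Ioo (0:ℝ) 1) :=
      hgc.isOpen_support.inter isOpen_Ioo
    have hpos' : 0 < volume (Function.support g ∩ Set.Ioo (0:ℝ) 1) :=
      hopen.measure_pos volume ⟨x, hx_supp⟩
    have : volume (Function.support g ∩ Set.Ioo (0:ℝ) 1) = 0 :=
      measure_mono_null (by
        intro z ⟨hz1, hz2⟩
        exact ⟨hz1, Set.Ioo_subset_Ioc_self hz2⟩) hsupp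
    rw [this] at hpos'; exact lt_irrefl _ hpos'
  -- derivative of β is zero on Ioo 0 1, i.e. pfluct f = 0 there
  have hfl0 : ∀ x ∈ Set.Ioo (0:ℝ) 1, pfluct f x = 0 := by
    intro x hx
    have h1 : HasDerivAt β (pfluct f x) x := pbracket_hasDerivAt hfc x
    have h2 : HasDerivAt β 0 x := by
      have : β =ᶠ[nhds x] fun _ => 0 := by
        filter_upwards [Ioo_mem_nhds hx.1 hx.2] with z hz using hβ0 z hz
      exact (hasDerivAt_const x (0:ℝ)).congr_of_eventuallyEq this
    exact h1.unique h2
  -- by continuity, pfluct f = 0 on [0,1]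
  have hfl0' : ∀ x ∈ Set.Icc (0:ℝ) 1, pfluct f x = 0 := by
    intro x hx
    have hcl : closure (Set.Ioo (0:ℝ) 1) = Set.Icc 0 1 := closure_Ioo one_ne_zero.symm
    have : Set.EqOn (pfluct f) (fun _ => 0) (closure (Set.Ioo (0:ℝ) 1)) :=
      Set.EqOn.closure (fun z hz => hfl0 z hz) (pfluct_continuous hfc) continuous_const
    rw [hcl] at this
    exact this hx
  -- pfluct f is periodic, hence zero everywhere
  have hfper : Function.Periodic f 1 := fun x => by simp only [hf, hper x]
  have hflper : Function.Periodic (pfluct f) 1 := fun x => by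
    simp only [pfluct, hfper x]
  have hfl_all : ∀ x : ℝ, pfluct f x = 0 := by
    intro x
    have hfrac : Int.fract x ∈ Set.Icc (0:ℝ) 1 :=
      ⟨Int.fract_nonneg x, (Int.fract_lt_one x).le⟩
    have h := hflper.sub_int_mul_eq (x := x) ⌊x⌋
    rw [← h]
    have hx' : x - (⌊x⌋ : ℝ) * 1 = Int.fract x := by
      rw [mul_one]; rfl
    rw [hx']
    exact hfl0' _ hfrac
  -- so f is constant, hence a is constant: contradiction
  have hconst : ∀ x : ℝ, a x = (pmean f)⁻¹ := by
    intro x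
    have h1 : f x = pmean f := by
      have := hfl_all x; simpa [pfluct, sub_eq_zero] using this
    have : (a x)⁻¹ = pmean f := h1
    rw [← this, inv_inv]
  exact hne (by rw [hconst x₀, hconst y₀])
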